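/- Let R be a commutative ring and let I be the set of equivalence classes of ring maps from R to valuation rings, where two maps R → V, R → V' are equivalent if there is a valuation ring W with injective local homomorphisms V → W ← V' commuting with the maps from R. Then each equivalence class contains a minimal representative: given v : R → V, the subring Frac(im(v)) ∩ V of Frac(V) is a valuation ring, the map R → V factors through it, and it maps to V by an injective local homomorphism. -/

import Mathlib

variable {R : Type*} [CommRing R] (V : Type*) [CommRing V] [IsDomain V] [ValuationRing V]

/-- The subring `Frac(im v) ∩ V` of `Frac(V)`. -/
noncomputable def stmt16V' (v : R →+* V) : Subring (FractionRing V) :=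
  (Subfield.closure
      (Set.range ((algebraMap V (FractionRing V)).comp v))).toSubring ⊓
    (algebraMap V (FractionRing V)).range

/-- given a ring map `v : R → V` to a valuation ring, the subring
`V' := Frac(im v) ∩ V` of `Frac(V)` is a valuation ring, the map `R → V` factors
through it, and `V'` maps to `V` by an injective local homomorphism. -/
theorem stmt16 (v : R →+* V) :
    ValuationRing (stmt16V' V v) ∧
    (∀ r : R, algebraMap V (FractionRing V) (v r) ∈ stmt16V' V v) ∧
    ∃ g : stmt16V' V v →+* V, Function.Injective g ∧
      (∀ x : stmt16V' V v, IsUnit (g x) → IsUnit x) ∧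
      ∀ x : stmt16V' V v, algebraMap V (FractionRing V) (g x) = (x : FractionRing V) := by
  set K := FractionRing V
  set F := Subfield.closure (Set.range ((algebraMap V K).comp v)) with hF
  have hinj : Function.Injective (algebraMap V K) := IsFractionRing.injective V K
  have hmem : ∀ x : K, x ∈ stmt16V' V v ↔ x ∈ F ∧ x ∈ (algebraMap V K).range := by
    intro x; rfl
  refine ⟨?_, ?_, ?_⟩
  · suffices h : PreValuationRing (stmt16V' V v) by exact @ValuationRing.mk _ _ _ h
    refine ⟨fun a b => ?_⟩
    obtain ⟨a, haF, a', rfl⟩ := a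
    obtain ⟨b, hbF, b', rfl⟩ := b
    obtain ⟨c, hc | hc⟩ := ValuationRing.cond a' b'
    · by_cases ha : a' = 0
      · subst ha
        simp only [zero_mul] at hc
        subst hc
        refine ⟨0, Or.inr ?_⟩
        ext
        simp
      · have hane : algebraMap V K a' ≠ 0 := fun h => ha (hinj (by simpa using h))
        have hcK : algebraMap V K c = algebraMap V K b' / algebraMap V K a' := by
          rw [eq_div_iff hane]
          rw [mul_comm, ← map_mul, hc]
        have hcF : algebraMap V K c ∈ F := by
          rw [hcK]; exact F.div_mem hbF haF
        refine ⟨⟨algebraMap V K c, hcF, c, rfl⟩, Or.inl ?_⟩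
        ext
        push_cast
        rw [← map_mul, hc]
    · by_cases hb : b' = 0
      · subst hb
        simp only [zero_mul] at hc
        subst hc
        refine ⟨0, Or.inl ?_⟩
        ext
        simp
      · have hbne : algebraMap V K b' ≠ 0 := fun h => hb (hinj (by simpa using h))
        have hcK : algebraMap V K c = algebraMap V K a' / algebraMap V K b' := by
          rw [eq_div_iff hbne]
          rw [mul_comm, ← map_mul, hc]
        have hcF : algebraMap V K c ∈ F := by
          rw [hcK]; exact F.div_mem haF hbF
        refine ⟨⟨algebraMap V K c, hcF, c, rfl⟩, Or.inr ?_⟩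
        ext
        push_cast
        rw [← map_mul, hc]
  · intro r
    exact ⟨Subfield.subset_closure ⟨r, rfl⟩, v r, rfl⟩
  · have hsub : stmt16V' V v ≤ (algebraMap V K).range := inf_le_right
    let e : V ≃+* (algebraMap V K).range :=
      RingEquiv.ofBijective (algebraMap V K).rangeRestrict
        ⟨fun x y h => hinj (congrArg Subtype.val h), (algebraMap V K).rangeRestrict_surjective⟩
    refine ⟨(e.symm : (algebraMap V K).range →+* V).comp (Subring.inclusion hsub), ?_, ?_, ?_⟩
    · intro x y h
      have hx := e.apply_symm_apply (Subring.inclusion hsub x)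
      have hy := e.apply_symm_apply (Subring.inclusion hsub y)
      simp only [RingHom.comp_apply, RingEquiv.coe_toRingHom] at h
      rw [h] at hx
      have h2 := congrArg Subtype.val (hx.symm.trans hy)
      exact Subtype.ext h2
    · intro x hx
      have key : ∀ z : stmt16V' V v,
          algebraMap V K (e.symm (Subring.inclusion hsub z)) = (z : K) := by
        intro z
        have := e.apply_symm_apply (Subring.inclusion hsub z)
        exact congrArg Subtype.val this
      obtain ⟨w, hw⟩ := isUnit_iff_exists_inv.mp hx
      simp only [RingHom.comp_apply, RingEquiv.coe_toRingHom] at hw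
      have h1 : (x : K) * algebraMap V K w = 1 := by
        rw [← key x, ← map_mul, hw, map_one]
      have hxne : (x : K) ≠ 0 := fun h => by simp [h] at h1
      have hwF : algebraMap V K w ∈ F := by
        have : algebraMap V K w = (x : K)⁻¹ := by
          exact eq_inv_of_mul_eq_one_right h1
        rw [this]
        exact F.inv_mem x.2.1
      refine isUnit_iff_exists_inv.mpr ⟨⟨algebraMap V K w, hwF, w, rfl⟩, ?_⟩
      ext
      push_cast
      exact h1
    · intro x
      have := e.apply_symm_apply (Subring.inclusion hsub x)
      exact congrArg Subtype.val this
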